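/- There exists a constant Q such that for every power of two q = 2^e with q ≥ Q, every finite field F with q^6 elements and every c ∈ 𝔠, the 𝔽_q-subspace U_c = {(x, x^q + x^{q^3} + c·x^{q^5}) : x ∈ F} of F × F is not the image of any of the previously known maximum scattered subspaces under any invertible semilinear map of F × F; concretely, for every field automorphism ρ of F and all A, B, C, D ∈ F with A·D − B·C ≠ 0: (a) for every s ∈ {1,5}, {(A·ρ(x) + B·ρ(x)^{q^s}, C·ρ(x) + D·ρ(x)^{q^s}) : x ∈ F} ≠ U_c; (b) for every s ∈ {1,5} and every δ ∈ F with δ^{q^5+q^4+q^3+q^2+q+1} ∉ {0,1}, {(A·ρ(x) + B·ρ(δ·x^{q^s} + x^{q^{6−s}}), C·ρ(x) + D·ρ(δ·x^{q^s} + x^{q^{6−s}})) : x ∈ F} ≠ U_c; (c) for every s ∈ {1,2,4,5} and every δ ∈ F with δ^{q^3+1} ∉ {0,1}, {(A·ρ(x) + B·ρ(δ·x^{q^s} + x^{q^{s+3}}), C·ρ(x) + D·ρ(δ·x^{q^s} + x^{q^{s+3}})) : x ∈ F} ≠ U_c. -/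

import Mathlib

open Polynomial in
lemma six' {q : ℕ} (hq : 2 ≤ q) {F : Type} [Field F] [Fintype F]
    (hcard : Fintype.card F = q ^ 6) (a0 a1 a2 a3 a4 a5 : F)
    (h : ∀ y : F, a0 * y ^ q ^ 0 + a1 * y ^ q ^ 1 + a2 * y ^ q ^ 2 + a3 * y ^ q ^ 3
      + a4 * y ^ q ^ 4 + a5 * y ^ q ^ 5 = 0) :
    a0 = 0 ∧ a1 = 0 ∧ a2 = 0 ∧ a3 = 0 ∧ a4 = 0 ∧ a5 = 0 := by
  classical
  set p : F[X] := C a0 * X ^ q ^ 0 + C a1 * X ^ q ^ 1 + C a2 * X ^ q ^ 2 + C a3 * X ^ q ^ 3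
      + C a4 * X ^ q ^ 4 + C a5 * X ^ q ^ 5 with hp
  have hbound : ∀ (a : F) (n : ℕ), (C a * X ^ n).natDegree ≤ n := fun a n =>
    (natDegree_C_mul_le a _).trans_eq (natDegree_X_pow n)
  have hle : ∀ i : ℕ, i ≤ 5 → q ^ i ≤ q ^ 5 := fun i hi =>
    Nat.pow_le_pow_right (by omega) hi
  have hdeg : p.natDegree < Fintype.card F := by
    rw [hcard]
    have h5 : q ^ 5 < q ^ 6 := Nat.pow_lt_pow_right (by omega) (by omega)
    refine lt_of_le_of_lt ?_ h5
    rw [hp]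
    refine le_trans (natDegree_add_le _ _) (max_le ?_ ((hbound _ _).trans (hle 5 (by omega))))
    refine le_trans (natDegree_add_le _ _) (max_le ?_ ((hbound _ _).trans (hle 4 (by omega))))
    refine le_trans (natDegree_add_le _ _) (max_le ?_ ((hbound _ _).trans (hle 3 (by omega))))
    refine le_trans (natDegree_add_le _ _) (max_le ?_ ((hbound _ _).trans (hle 2 (by omega))))
    refine le_trans (natDegree_add_le _ _) (max_le ?_ ((hbound _ _).trans (hle 1 (by omega))))
    exact (hbound _ _).trans (hle 0 (by omega))
  have hp0 : p = 0 := by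
    refine Polynomial.eq_zero_of_natDegree_lt_card_of_eval_eq_zero p
      Function.injective_id (fun y => ?_) hdeg
    simp only [hp, eval_add, eval_mul, eval_pow, eval_C, eval_X, id]
    exact h y
  have hiff : ∀ i j : ℕ, q ^ i = q ^ j ↔ i = j := fun i j =>
    ⟨fun h => Nat.pow_right_injective hq h, fun h => by rw [h]⟩
  have key : ∀ i : ℕ, p.coeff (q ^ i) = 0 := fun i => by rw [hp0, coeff_zero]
  have k0 := key 0; have k1 := key 1; have k2 := key 2
  have k3 := key 3; have k4 := key 4; have k5 := key 5
  simp only [hp, coeff_add, coeff_C_mul, coeff_X_pow, hiff] at k0 k1 k2 k3 k4 k5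
  norm_num at k0 k1 k2 k3 k4 k5
  exact ⟨k0, k1, k2, k3, k4, k5⟩

lemma graph_eq' {F : Type} [Field F] {f g L : F → F}
    (h : {p : F × F | ∃ x, p = (f x, g x)} = {p : F × F | ∃ x, p = (x, L x)}) :
    ∀ x, g x = L (f x) := by
  intro x
  have hx : (f x, g x) ∈ {p : F × F | ∃ x, p = (x, L x)} := by
    rw [← h]; exact ⟨x, rfl⟩
  obtain ⟨x', hx'⟩ := hx
  have h1 : f x = x' := congrArg Prod.fst hx'
  have h2 : g x = L x' := congrArg Prod.snd hx'
  rw [h1]; exact h2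



noncomputable section

def F1 (q : ℕ) {F : Type*} [Field F] (c : F) : F :=
  c ^ (q ^ 4 + 2 * q ^ 3 + q ^ 2 + q + 1) + c ^ (q ^ 4 + q ^ 3 + q ^ 2 + 1)
    + c ^ (q ^ 3 + q + 1) + c + c ^ (2 * q ^ 3 + q ^ 2 + q) + c ^ (q ^ 3 + q ^ 2 + q)
    + c ^ (q ^ 3) + 1

def F2 (q : ℕ) {F : Type*} [Field F] (c : F) : F :=
  c ^ (q ^ 3 + q ^ 2 + 2 * q + 2) + c ^ (q ^ 2 + q + 2) + c ^ (q ^ 3 + 2 * q ^ 2 + 2 * q + 1)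
    + c ^ (2 * q ^ 3 + 2 * q ^ 2 + q + 1) + c ^ (q ^ 2 + q + 1) + c ^ (q ^ 3 + q + 1)
    + c ^ (q ^ 3 + q ^ 2 + 1) + c + c ^ (2 * q ^ 3 + q ^ 2 + q) + c ^ (q ^ 3 + q ^ 2 + q)
    + c ^ (q ^ 3) + 1

def F3 (q : ℕ) {F : Type*} [Field F] (c : F) : F := c ^ (q ^ 2 + q + 1) + 1

def F4 (q : ℕ) {F : Type*} [Field F] (c : F) : F :=
  c ^ (2 * q ^ 2 + q + 4) + c ^ (3 * q ^ 2 + 2 * q + 3) + c ^ (q ^ 2 + 2 * q + 3)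
    + c ^ (3 * q ^ 2 + q + 3) + c ^ (q ^ 2 + q + 3) + c ^ (2 * q ^ 2 + 3) + c ^ (q ^ 2 + 3)
    + c ^ (4 * q ^ 2 + q + 2) + c ^ (q + 2) + c ^ (3 * q ^ 2 + 2) + c ^ 2
    + c ^ (3 * q ^ 2 + 2 * q + 1) + c ^ (q ^ 2 + 2 * q + 1) + c ^ (3 * q ^ 2 + q + 1)
    + c ^ (q ^ 2 + q + 1) + c ^ (3 * q ^ 2 + 1) + c + c ^ (2 * q ^ 2 + q) + c ^ (2 * q ^ 2)
    + c ^ (q ^ 2)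

def F5 (q : ℕ) {F : Type*} [Field F] (c : F) : F :=
  c ^ (2 * q ^ 2 + q + 2) + c ^ (q ^ 2 + q + 2) + c ^ (2 * q ^ 2 + 2)
    + c ^ (2 * q ^ 2 + q + 1) + c ^ (q ^ 2 + q + 1) + 1

def frakC (q : ℕ) (F : Type*) [Field F] : Set F :=
  {c | c ^ (q ^ 2) ≠ c ∧ F1 q c = 0 ∧ F2 q c = 0 ∧ F3 q c * F4 q c * F5 q c ≠ 0}

def IsScattered (q : ℕ) {F : Type*} [Field F] (f : F → F) : Prop :=
  ∀ y z : F, y ≠ 0 → z ≠ 0 → f y * z = f z * y → ∃ l : F, l ^ q = l ∧ y = l * z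

theorem statement19 :
    ∃ Q : ℕ, ∀ (e q : ℕ), 1 ≤ e → q = 2 ^ e → Q ≤ q →
      ∀ (F : Type) [Field F] [Fintype F], Fintype.card F = q ^ 6 →
        ∀ c ∈ frakC q F, ∀ ρ : F ≃+* F, ∀ A B C D : F, A * D - B * C ≠ 0 →
          (∀ s ∈ ({1, 5} : Set ℕ),
            {p : F × F | ∃ x : F,
                p = (A * ρ x + B * (ρ x) ^ (q ^ s), C * ρ x + D * (ρ x) ^ (q ^ s))} ≠
              {p : F × F | ∃ x : F, p = (x, x ^ q + x ^ (q ^ 3) + c * x ^ (q ^ 5))}) ∧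
          (∀ s ∈ ({1, 5} : Set ℕ), ∀ δ : F,
            δ ^ (q ^ 5 + q ^ 4 + q ^ 3 + q ^ 2 + q + 1) ≠ 0 →
            δ ^ (q ^ 5 + q ^ 4 + q ^ 3 + q ^ 2 + q + 1) ≠ 1 →
            {p : F × F | ∃ x : F,
                p = (A * ρ x + B * ρ (δ * x ^ (q ^ s) + x ^ (q ^ (6 - s))),
                  C * ρ x + D * ρ (δ * x ^ (q ^ s) + x ^ (q ^ (6 - s))))} ≠
              {p : F × F | ∃ x : F, p = (x, x ^ q + x ^ (q ^ 3) + c * x ^ (q ^ 5))}) ∧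
          (∀ s ∈ ({1, 2, 4, 5} : Set ℕ), ∀ δ : F,
            δ ^ (q ^ 3 + 1) ≠ 0 → δ ^ (q ^ 3 + 1) ≠ 1 →
            {p : F × F | ∃ x : F,
                p = (A * ρ x + B * ρ (δ * x ^ (q ^ s) + x ^ (q ^ (s + 3))),
                  C * ρ x + D * ρ (δ * x ^ (q ^ s) + x ^ (q ^ (s + 3))))} ≠
              {p : F × F | ∃ x : F, p = (x, x ^ q + x ^ (q ^ 3) + c * x ^ (q ^ 5))}) := by
  refine ⟨2, ?_⟩
  intro e q he hqe hQ F _ _ hcard c hc ρ A B C D hABCD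
  obtain ⟨hcne, hF1, hF2, hF345⟩ := hc
  have hq2 : 2 ≤ q := hQ
  have hq0 : q ≠ 0 := by omega
  haveI : Fact (Nat.Prime 2) := ⟨Nat.prime_two⟩
  haveI hchar : CharP F 2 := by
    obtain ⟨n, hp, hcardp⟩ := FiniteField.card F (ringChar F)
    have hdvd : ringChar F ∣ 2 ^ (e * 6) := by
      have h1 : ringChar F ∣ Fintype.card F := by
        rw [hcardp]; exact dvd_pow_self _ n.pos.ne'
      rwa [hcard, hqe, ← pow_mul] at h1
    have h2 : ringChar F = 2 :=
      (Nat.prime_dvd_prime_iff_eq hp Nat.prime_two).mp (hp.dvd_of_dvd_pow hdvd)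
    exact h2 ▸ ringChar.charP F
  have faddq : ∀ u v : F, (u + v) ^ q = u ^ q + v ^ q := by
    intro u v; rw [hqe]; exact add_pow_char_pow u v 2 e
  have faddqj : ∀ (j : ℕ) (u v : F), (u + v) ^ q ^ j = u ^ q ^ j + v ^ q ^ j := by
    intro j u v; rw [hqe, ← pow_mul]; exact add_pow_char_pow u v 2 (e * j)
  have ppowq : ∀ (u : F) (i : ℕ), (u ^ q ^ i) ^ q = u ^ q ^ (i + 1) := by
    intro u i; rw [← pow_mul, ← pow_succ]
  have ppowqj : ∀ (u : F) (i j : ℕ), (u ^ q ^ i) ^ q ^ j = u ^ q ^ (i + j) := by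
    intro u i j; rw [← pow_mul, ← pow_add]
  have r6 : ∀ u : F, u ^ q ^ 6 = u := by
    intro u; rw [← hcard]; exact FiniteField.pow_card u
  have rbig : ∀ (u : F) (i : ℕ), u ^ q ^ (i + 6) = u ^ q ^ i := by
    intro u i
    have h1 : q ^ (i + 6) = q ^ 6 * q ^ i := by ring
    rw [h1, pow_mul, r6]
  have r7 : ∀ u : F, u ^ q ^ 7 = u ^ q ^ 1 := fun u => by
    have h1 : (7:ℕ) = 1 + 6 := by norm_num
    rw [h1]; exact rbig u 1
  have r8 : ∀ u : F, u ^ q ^ 8 = u ^ q ^ 2 := fun u => by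
    have h1 : (8:ℕ) = 2 + 6 := by norm_num
    rw [h1]; exact rbig u 2
  have r9 : ∀ u : F, u ^ q ^ 9 = u ^ q ^ 3 := fun u => by
    have h1 : (9:ℕ) = 3 + 6 := by norm_num
    rw [h1]; exact rbig u 3
  have r10 : ∀ u : F, u ^ q ^ 10 = u ^ q ^ 4 := fun u => by
    have h1 : (10:ℕ) = 4 + 6 := by norm_num
    rw [h1]; exact rbig u 4
  have frobinj : ∀ (m : ℕ) (u v : F), u ^ 2 ^ m = v ^ 2 ^ m → u = v := by
    intro m u v h
    have hs : (u - v) ^ 2 ^ m = 0 := by rw [sub_pow_char_pow, h, sub_self]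
    exact sub_eq_zero.mp (pow_eq_zero_iff (pow_ne_zero m two_ne_zero) |>.mp hs)
  have hc0 : c ≠ 0 := by
    intro h
    rw [h] at hF1
    have A1 : q ^ 3 ≠ 0 := pow_ne_zero 3 hq0
    have A2 : q ^ 3 + q ^ 2 + q ≠ 0 := fun hh => hq0 (Nat.add_eq_zero.mp hh).2
    have A3 : 2 * q ^ 3 + q ^ 2 + q ≠ 0 := fun hh => hq0 (Nat.add_eq_zero.mp hh).2
    simp [F1, A1, A2, A3] at hF1
    rw [zero_pow A1, zero_pow A2, zero_pow A3] at hF1; simp at hF1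
  have hBkey : ∀ Bb : F, Bb ≠ 0 →
      Bb ^ (q ^ 3 * (q ^ 5 + q ^ 4 + q ^ 3 + q ^ 2 + q + 1))
        = Bb ^ (q ^ 1 * (q ^ 5 + q ^ 4 + q ^ 3 + q ^ 2 + q + 1)) := by
    intro Bb hB
    have hnat : q ^ 3 * (q ^ 5 + q ^ 4 + q ^ 3 + q ^ 2 + q + 1) + q * (q + 1)
        = q ^ 1 * (q ^ 5 + q ^ 4 + q ^ 3 + q ^ 2 + q + 1) + q ^ 6 * (q * (q + 1)) := by ring
    have h1 : Bb ^ (q ^ 3 * (q ^ 5 + q ^ 4 + q ^ 3 + q ^ 2 + q + 1)) * Bb ^ (q * (q + 1))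
        = Bb ^ (q ^ 1 * (q ^ 5 + q ^ 4 + q ^ 3 + q ^ 2 + q + 1)) * Bb ^ (q ^ 6 * (q * (q + 1))) := by
      rw [← pow_add, ← pow_add, hnat]
    rw [pow_mul Bb (q ^ 6), r6] at h1
    exact mul_right_cancel₀ (pow_ne_zero _ hB) h1
  have hsub0 : ∀ u : F, ∀ n : ℕ, u ^ n = 0 → u ≠ 0 → False := fun u n h hu =>
    hu (pow_eq_zero_iff (fun h0 => by rw [h0, pow_zero] at h; exact one_ne_zero h) |>.mp h)
  have hpz : ∀ i : ℕ, q ^ i ≠ 0 := fun i => pow_ne_zero i hq0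
  refine ⟨?_, ?_, ?_⟩
  · -- case (a)
    intro s hs heq
    simp only [Set.mem_insert_iff, Set.mem_singleton_iff] at hs
    have h0 := graph_eq' heq
    rcases hs with rfl | rfl
    · obtain ⟨k0, k1, k2, k3, k4, k5⟩ := six' hq2 hcard
        (c * B ^ q ^ 5 - C)
        (A ^ q ^ 1 - D)
        (B ^ q ^ 1)
        (A ^ q ^ 3)
        (B ^ q ^ 3)
        (c * A ^ q ^ 5) (by
      intro y
      have h1 := h0 (ρ.symm y)
      simp only [map_add, map_mul, map_pow, RingEquiv.apply_symm_apply, Nat.reduceAdd,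
        Nat.reduceSub, r6, r7, r8, r9, r10] at h1
      simp only [faddq, faddqj, mul_pow, ppowq, ppowqj, Nat.reduceAdd, r6, r7, r8, r9,
        r10] at h1
      simp only [pow_zero, pow_one] at h1 ⊢
      linear_combination -h1)
      have hB0 : B = 0 := pow_eq_zero_iff (hpz 1) |>.mp k2
      have hA0 : A = 0 := pow_eq_zero_iff (hpz 3) |>.mp k3
      exact hABCD (by rw [hA0, hB0]; ring)
    · obtain ⟨k0, k1, k2, k3, k4, k5⟩ := six' hq2 hcard
        (B ^ q ^ 1 - C)
        (A ^ q ^ 1)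
        (B ^ q ^ 3)
        (A ^ q ^ 3)
        (c * B ^ q ^ 5)
        (c * A ^ q ^ 5 - D) (by
      intro y
      have h1 := h0 (ρ.symm y)
      simp only [map_add, map_mul, map_pow, RingEquiv.apply_symm_apply, Nat.reduceAdd,
        Nat.reduceSub, r6, r7, r8, r9, r10] at h1
      simp only [faddq, faddqj, mul_pow, ppowq, ppowqj, Nat.reduceAdd, r6, r7, r8, r9,
        r10] at h1
      simp only [pow_zero, pow_one] at h1 ⊢
      linear_combination -h1)
      have hA0 : A = 0 := pow_eq_zero_iff (hpz 1) |>.mp k1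
      have hB0 : B = 0 := pow_eq_zero_iff (hpz 3) |>.mp k2
      exact hABCD (by rw [hA0, hB0]; ring)
  · -- case (b)
    intro s hs δ hδ0 hδ1 heq
    simp only [Set.mem_insert_iff, Set.mem_singleton_iff] at hs
    have h0 := graph_eq' heq
    rcases hs with rfl | rfl
    · obtain ⟨k0, k1, k2, k3, k4, k5⟩ := six' hq2 hcard
        (B ^ q ^ 1 + c * B ^ q ^ 5 * (ρ δ) ^ q ^ 5 - C)
        (A ^ q ^ 1 - D * ρ δ)
        (B ^ q ^ 1 * (ρ δ) ^ q ^ 1 + B ^ q ^ 3)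
        (A ^ q ^ 3)
        (B ^ q ^ 3 * (ρ δ) ^ q ^ 3 + c * B ^ q ^ 5)
        (c * A ^ q ^ 5 - D) (by
      intro y
      have h1 := h0 (ρ.symm y)
      simp only [map_add, map_mul, map_pow, RingEquiv.apply_symm_apply, Nat.reduceAdd,
        Nat.reduceSub, r6, r7, r8, r9, r10] at h1
      simp only [faddq, faddqj, mul_pow, ppowq, ppowqj, Nat.reduceAdd, r6, r7, r8, r9,
        r10] at h1
      simp only [pow_zero, pow_one] at h1 ⊢
      linear_combination -h1)
      have hA0 : A = 0 := pow_eq_zero_iff (hpz 3) |>.mp k3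
      have hD0 : D = 0 := by
        have h2 := sub_eq_zero.mp k5
        rw [hA0] at h2
        simpa [zero_pow (hpz 5)] using h2.symm
      have hB0 : B ≠ 0 := fun hB => hABCD (by rw [hA0, hB]; ring)
      have key : B ^ q ^ 1 * (ρ δ) ^ q ^ 1 = B ^ q ^ 3 := by
        have h2 : B ^ q ^ 1 * (ρ δ) ^ q ^ 1 - B ^ q ^ 3 = 0 := by rw [CharTwo.sub_eq_add]; exact k2
        exact sub_eq_zero.mp h2
      apply hδ1
      have hN : (ρ δ) ^ (q ^ 5 + q ^ 4 + q ^ 3 + q ^ 2 + q + 1) = 1 := by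
        have e2 : B ^ (q ^ 1 * (q ^ 5 + q ^ 4 + q ^ 3 + q ^ 2 + q + 1))
            * (ρ δ) ^ (q ^ 1 * (q ^ 5 + q ^ 4 + q ^ 3 + q ^ 2 + q + 1))
            = B ^ (q ^ 3 * (q ^ 5 + q ^ 4 + q ^ 3 + q ^ 2 + q + 1)) := by
          rw [pow_mul, pow_mul, pow_mul, ← mul_pow, key]
        have e3 : B ^ (q ^ 1 * (q ^ 5 + q ^ 4 + q ^ 3 + q ^ 2 + q + 1))
            * (ρ δ) ^ (q ^ 1 * (q ^ 5 + q ^ 4 + q ^ 3 + q ^ 2 + q + 1))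
            = B ^ (q ^ 1 * (q ^ 5 + q ^ 4 + q ^ 3 + q ^ 2 + q + 1)) * 1 := by
          rw [mul_one, e2, hBkey B hB0]
        have e4 := mul_left_cancel₀ (pow_ne_zero _ hB0) e3
        have e6 : ((ρ δ) ^ (q ^ 5 + q ^ 4 + q ^ 3 + q ^ 2 + q + 1)) ^ q ^ 1 = 1 := by
          rw [← pow_mul, Nat.mul_comm]; exact e4
        refine frobinj (e * 1) _ 1 ?_
        rw [one_pow]
        have hq3 : (2:ℕ) ^ (e * 1) = q ^ 1 := by rw [hqe, ← pow_mul]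
        rw [hq3]; exact e6
      apply ρ.injective
      rw [map_pow, map_one]; exact hN
    · obtain ⟨k0, k1, k2, k3, k4, k5⟩ := six' hq2 hcard
        (B ^ q ^ 1 * (ρ δ) ^ q ^ 1 + c * B ^ q ^ 5 - C)
        (A ^ q ^ 1 - D)
        (B ^ q ^ 1 + B ^ q ^ 3 * (ρ δ) ^ q ^ 3)
        (A ^ q ^ 3)
        (B ^ q ^ 3 + c * B ^ q ^ 5 * (ρ δ) ^ q ^ 5)
        (c * A ^ q ^ 5 - D * ρ δ) (by
      intro y
      have h1 := h0 (ρ.symm y)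
      simp only [map_add, map_mul, map_pow, RingEquiv.apply_symm_apply, Nat.reduceAdd,
        Nat.reduceSub, r6, r7, r8, r9, r10] at h1
      simp only [faddq, faddqj, mul_pow, ppowq, ppowqj, Nat.reduceAdd, r6, r7, r8, r9,
        r10] at h1
      simp only [pow_zero, pow_one] at h1 ⊢
      linear_combination -h1)
      have hA0 : A = 0 := pow_eq_zero_iff (hpz 3) |>.mp k3
      have hD0 : D = 0 := by
        have h2 := sub_eq_zero.mp k1
        rw [hA0] at h2
        simpa [zero_pow hq0, zero_pow (hpz 1)] using h2.symm
      have hB0 : B ≠ 0 := fun hB => hABCD (by rw [hA0, hB]; ring)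
      have key : B ^ q ^ 3 * (ρ δ) ^ q ^ 3 = B ^ q ^ 1 := by
        have h2 : B ^ q ^ 3 * (ρ δ) ^ q ^ 3 - B ^ q ^ 1 = 0 := by rw [CharTwo.sub_eq_add]; exact (by linear_combination k2 : B ^ q ^ 3 * (ρ δ) ^ q ^ 3 + B ^ q ^ 1 = 0)
        exact sub_eq_zero.mp h2
      apply hδ1
      have hN : (ρ δ) ^ (q ^ 5 + q ^ 4 + q ^ 3 + q ^ 2 + q + 1) = 1 := by
        have e2 : B ^ (q ^ 3 * (q ^ 5 + q ^ 4 + q ^ 3 + q ^ 2 + q + 1))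
            * (ρ δ) ^ (q ^ 3 * (q ^ 5 + q ^ 4 + q ^ 3 + q ^ 2 + q + 1))
            = B ^ (q ^ 1 * (q ^ 5 + q ^ 4 + q ^ 3 + q ^ 2 + q + 1)) := by
          rw [pow_mul, pow_mul, pow_mul, ← mul_pow, key]
        have e3 : B ^ (q ^ 3 * (q ^ 5 + q ^ 4 + q ^ 3 + q ^ 2 + q + 1))
            * (ρ δ) ^ (q ^ 3 * (q ^ 5 + q ^ 4 + q ^ 3 + q ^ 2 + q + 1))
            = B ^ (q ^ 3 * (q ^ 5 + q ^ 4 + q ^ 3 + q ^ 2 + q + 1)) * 1 := by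
          rw [mul_one, e2, hBkey B hB0]
        have e4 := mul_left_cancel₀ (pow_ne_zero _ hB0) e3
        have e6 : ((ρ δ) ^ (q ^ 5 + q ^ 4 + q ^ 3 + q ^ 2 + q + 1)) ^ q ^ 3 = 1 := by
          rw [← pow_mul, Nat.mul_comm]; exact e4
        refine frobinj (e * 3) _ 1 ?_
        rw [one_pow]
        have hq3 : (2:ℕ) ^ (e * 3) = q ^ 3 := by rw [hqe, ← pow_mul]
        rw [hq3]; exact e6
      apply ρ.injective
      rw [map_pow, map_one]; exact hN
  · -- case (c)
    intro s hs δ hδ0 hδ1 heq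
    simp only [Set.mem_insert_iff, Set.mem_singleton_iff] at hs
    have hδne : δ ≠ 0 := fun h => hδ0 (by rw [h]; exact zero_pow (Nat.succ_ne_zero _))
    have hd0 : ρ δ ≠ 0 := fun h => hδne (ρ.injective (by rw [map_zero]; exact h))
    have h0 := graph_eq' heq
    rcases hs with rfl | rfl | rfl | rfl
    · obtain ⟨k0, k1, k2, k3, k4, k5⟩ := six' hq2 hcard
        (c * B ^ q ^ 5 * (ρ δ) ^ q ^ 5 - C)
        (A ^ q ^ 1 + B ^ q ^ 3 - D * ρ δ)
        (B ^ q ^ 1 * (ρ δ) ^ q ^ 1)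
        (A ^ q ^ 3 + c * B ^ q ^ 5)
        (B ^ q ^ 3 * (ρ δ) ^ q ^ 3 - D)
        (B ^ q ^ 1 + c * A ^ q ^ 5) (by
      intro y
      have h1 := h0 (ρ.symm y)
      simp only [map_add, map_mul, map_pow, RingEquiv.apply_symm_apply, Nat.reduceAdd,
        Nat.reduceSub, r6, r7, r8, r9, r10] at h1
      simp only [faddq, faddqj, mul_pow, ppowq, ppowqj, Nat.reduceAdd, r6, r7, r8, r9,
        r10] at h1
      simp only [pow_zero, pow_one] at h1 ⊢
      linear_combination -h1)
      have hB0 : B = 0 := by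
        rcases mul_eq_zero.mp k2 with h | h
        · exact pow_eq_zero_iff (hpz 1) |>.mp h
        · exact absurd (pow_eq_zero_iff (hpz 1) |>.mp h) hd0
      have hA0 : A = 0 := by
        rw [hB0] at k3
        simp only [zero_pow (hpz 5), mul_zero, add_zero] at k3
        exact pow_eq_zero_iff (hpz 3) |>.mp k3
      exact hABCD (by rw [hA0, hB0]; ring)
    · obtain ⟨k0, k1, k2, k3, k4, k5⟩ := six' hq2 hcard
        (B ^ q ^ 1 - C)
        (A ^ q ^ 1 + c * B ^ q ^ 5 * (ρ δ) ^ q ^ 5)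
        (B ^ q ^ 3 - D * ρ δ)
        (B ^ q ^ 1 * (ρ δ) ^ q ^ 1 + A ^ q ^ 3)
        (c * B ^ q ^ 5)
        (B ^ q ^ 3 * (ρ δ) ^ q ^ 3 + c * A ^ q ^ 5 - D) (by
      intro y
      have h1 := h0 (ρ.symm y)
      simp only [map_add, map_mul, map_pow, RingEquiv.apply_symm_apply, Nat.reduceAdd,
        Nat.reduceSub, r6, r7, r8, r9, r10] at h1
      simp only [faddq, faddqj, mul_pow, ppowq, ppowqj, Nat.reduceAdd, r6, r7, r8, r9,
        r10] at h1
      simp only [pow_zero, pow_one] at h1 ⊢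
      linear_combination -h1)
      have hB0 : B = 0 := by
        rcases mul_eq_zero.mp k4 with h | h
        · exact absurd h hc0
        · exact pow_eq_zero_iff (hpz 5) |>.mp h
      have hA0 : A = 0 := by
        rw [hB0] at k3
        simp only [zero_pow (hpz 1), zero_mul, zero_add] at k3
        exact pow_eq_zero_iff (hpz 3) |>.mp k3
      exact hABCD (by rw [hA0, hB0]; ring)
    · obtain ⟨k0, k1, k2, k3, k4, k5⟩ := six' hq2 hcard
        (c * B ^ q ^ 5 - C)
        (A ^ q ^ 1 + B ^ q ^ 3 * (ρ δ) ^ q ^ 3 - D)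
        (B ^ q ^ 1)
        (A ^ q ^ 3 + c * B ^ q ^ 5 * (ρ δ) ^ q ^ 5)
        (B ^ q ^ 3 - D * ρ δ)
        (B ^ q ^ 1 * (ρ δ) ^ q ^ 1 + c * A ^ q ^ 5) (by
      intro y
      have h1 := h0 (ρ.symm y)
      simp only [map_add, map_mul, map_pow, RingEquiv.apply_symm_apply, Nat.reduceAdd,
        Nat.reduceSub, r6, r7, r8, r9, r10] at h1
      simp only [faddq, faddqj, mul_pow, ppowq, ppowqj, Nat.reduceAdd, r6, r7, r8, r9,
        r10] at h1
      simp only [pow_zero, pow_one] at h1 ⊢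
      linear_combination -h1)
      have hB0 : B = 0 := pow_eq_zero_iff (hpz 1) |>.mp k2
      have hA0 : A = 0 := by
        rw [hB0] at k3
        simp only [zero_pow (hpz 5), mul_zero, zero_mul, add_zero] at k3
        exact pow_eq_zero_iff (hpz 3) |>.mp k3
      exact hABCD (by rw [hA0, hB0]; ring)
    · obtain ⟨k0, k1, k2, k3, k4, k5⟩ := six' hq2 hcard
        (B ^ q ^ 1 * (ρ δ) ^ q ^ 1 - C)
        (A ^ q ^ 1 + c * B ^ q ^ 5)
        (B ^ q ^ 3 * (ρ δ) ^ q ^ 3 - D)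
        (B ^ q ^ 1 + A ^ q ^ 3)
        (c * B ^ q ^ 5 * (ρ δ) ^ q ^ 5)
        (B ^ q ^ 3 + c * A ^ q ^ 5 - D * ρ δ) (by
      intro y
      have h1 := h0 (ρ.symm y)
      simp only [map_add, map_mul, map_pow, RingEquiv.apply_symm_apply, Nat.reduceAdd,
        Nat.reduceSub, r6, r7, r8, r9, r10] at h1
      simp only [faddq, faddqj, mul_pow, ppowq, ppowqj, Nat.reduceAdd, r6, r7, r8, r9,
        r10] at h1
      simp only [pow_zero, pow_one] at h1 ⊢
      linear_combination -h1)
      have hB0 : B = 0 := by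
        rcases mul_eq_zero.mp k4 with h | h
        · rcases mul_eq_zero.mp h with h2 | h2
          · exact absurd h2 hc0
          · exact pow_eq_zero_iff (hpz 5) |>.mp h2
        · exact absurd (pow_eq_zero_iff (hpz 5) |>.mp h) hd0
      have hA0 : A = 0 := by
        rw [hB0] at k3
        simp only [zero_pow (hpz 1), zero_add] at k3
        exact pow_eq_zero_iff (hpz 3) |>.mp k3
      exact hABCD (by rw [hA0, hB0]; ring)
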